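/- arXiv:2501.13651 — 4 statements merged into one kernel-verified Lean document; each statement's English description precedes it below -/
import Mathlib

section
/- Let A be an abelian category admitting countable products, and let (J_s)_{s≥1} be a sequence of injective objects of A. Then the inverse system I_n := ∏_{s=1}^n J_s, with transition maps I_{n+1} → I_n the canonical projections, is an injective object of the abelian category of ℕ-indexed inverse systems in A (i.e., the functor category from ℕ^op to A). -/
open CategoryTheory CategoryTheory.Limits Opposite

variable {A : Type*} [Category A] [Abelian A] [HasCountableProducts A]

/-- The inverse system `n ↦ ∏_{s < n} J s` of finite products of the objects
`J s`, with transition maps the canonical projections, viewed as a functor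
`ℕᵒᵖ ⥤ A`. -/
noncomputable def prodSystem (J : ℕ → A) : ℕᵒᵖ ⥤ A where
  obj n := ∏ᶜ (fun s : Fin n.unop => J s.1)
  map {n m} f :=
    Pi.lift (fun s : Fin m.unop =>
      Pi.π (fun s : Fin n.unop => J s.1) (Fin.castLE (leOfHom f.unop) s))
  map_id n := by
    apply Pi.hom_ext
    intro s
    simp
  map_comp {n m k} f g := by
    apply Pi.hom_ext
    intro s
    simp
    rfl

/-- If each `J s` is injective, then the inverse system
`I_n = ∏_{s=1}^n J_s` (with projections as transition maps) is an injective
object of the abelian category of `ℕ`-indexed inverse systems in `A`,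
i.e. of the functor category `ℕᵒᵖ ⥤ A`. -/
theorem stmt_1 (J : ℕ → A) (hJ : ∀ s, Injective (J s)) :
    Injective (prodSystem J) := by
  constructor
  intro X Y g f hf
  -- for each s, lift g.app (op (s+1)) ≫ π s through f.app (op (s+1))
  haveI : ∀ s : ℕ, Injective (J s) := hJ
  let φ : ∀ s : ℕ, Y.obj (op (s + 1)) ⟶ J s := fun s =>
    letI := hJ s
    Injective.factorThru
      (g.app (op (s + 1)) ≫ Pi.π (fun t : Fin (s + 1) => J t.1) ⟨s, Nat.lt_succ_self s⟩)
      (f.app (op (s + 1)))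
  have hφ : ∀ s : ℕ, f.app (op (s + 1)) ≫ φ s =
      g.app (op (s + 1)) ≫ Pi.π (fun t : Fin (s + 1) => J t.1) ⟨s, Nat.lt_succ_self s⟩ :=
    fun s => letI := hJ s; Injective.comp_factorThru _ _
  refine ⟨⟨fun n => Pi.lift (fun s : Fin n.unop =>
      Y.map (homOfLE (Nat.succ_le_of_lt s.2) : (s.1 + 1 : ℕ) ⟶ n.unop).op ≫ φ s.1), ?_⟩, ?_⟩
  · intro n m u
    apply Pi.hom_ext
    intro s
    simp only [prodSystem, Category.assoc, limit.lift_π, Fan.mk_π_app]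
    rw [← Y.map_comp_assoc]
    rfl
  · apply NatTrans.ext
    funext n
    apply Pi.hom_ext
    intro s
    simp only [NatTrans.comp_app, Category.assoc, limit.lift_π, Fan.mk_π_app]
    erw [Category.assoc, limit.lift_π]
    simp only [Fan.mk_π_app]
    rw [← NatTrans.naturality_assoc, hφ]
    erw [NatTrans.naturality_assoc]
    simp only [prodSystem, limit.lift_π, Fan.mk_π_app]
    rfl
end

section
/- Let K be a field of characteristic zero, V a K-vector space, and N : V → V a nilpotent K-linear endomorphism. Let V[u] denote the K-vector space of polynomials in u with coefficients in V, and define D : V[u] → V[u] by D(∑_i v_i u^i) = ∑_i (N v_i) u^i + ∑_{i≥1} i·v_{i} u^{i-1}. Then the sequence 0 → V → V[u] → V[u] → 0 is exact, where the first map sends v to exp(−Nu)·v := ∑_{i≥0} ((−1)^i/i!) (N^i v) u^i (a finite sum by nilpotence) and the second map is D. In particular D is surjective and its kernel is exactly {exp(−Nu)·v : v ∈ V}. -/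
variable {K V : Type} [Field K] [CharZero K] [AddCommGroup V] [Module K V]

/-- The monodromy-type operator `D` on `V[u]` (modelled as `ℕ →₀ V`, the
coefficient of `u^i` being the value at `i`):
`D(∑ v_i u^i) = ∑ (N v_i) u^i + ∑_{i ≥ 1} i · v_i u^{i-1}`, i.e. the
coefficient of `u^i` in `D p` is `N (p i) + (i+1) • p (i+1)`. -/
noncomputable def polyD (N : V →ₗ[K] V) (p : ℕ →₀ V) : ℕ →₀ V :=
  Finsupp.onFinset (p.support ∪ p.support.image (· - 1))
    (fun i => N (p i) + (i + 1) • p (i + 1))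
    (fun i h => by
      by_cases h1 : p i = 0
      · have h2 : p (i + 1) ≠ 0 := by
          intro h2
          exact h (by simp [h1, h2])
        exact Finset.mem_union_right _
          (Finset.mem_image.mpr ⟨i + 1, Finsupp.mem_support_iff.mpr h2, by omega⟩)
      · exact Finset.mem_union_left _ (Finsupp.mem_support_iff.mpr h1))

/-- The map `v ↦ exp(−Nu)·v = ∑_{i<m} ((−1)^i/i!) (N^i v) u^i ∈ V[u]`,
a finite sum since `N^m = 0`. -/
noncomputable def expNegNu (N : V →ₗ[K] V) (m : ℕ) (hm : N ^ m = 0) (v : V) :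
    ℕ →₀ V :=
  Finsupp.onFinset (Finset.range m)
    (fun i => (((-1 : K) ^ i / i.factorial) • ((N ^ i) v)))
    (fun i hi =>
      Finset.mem_range.mpr (by
        by_contra hc
        push_neg at hc
        apply hi
        have hz : (N : V →ₗ[K] V) ^ i = 0 := by
          rw [show i = (i - m) + m by omega, pow_add, hm, mul_zero]
        simp [hz]))

lemma polyD_apply (N : V →ₗ[K] V) (p : ℕ →₀ V) (i : ℕ) :
    polyD N p i = N (p i) + (i + 1) • p (i + 1) := rfl

lemma expNegNu_apply (N : V →ₗ[K] V) (m : ℕ) (hm : N ^ m = 0) (v : V) (i : ℕ) :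
    expNegNu N m hm v i = ((-1 : K) ^ i / i.factorial) • ((N ^ i) v) := rfl

lemma nsmul_to_ksmul (n : ℕ) (x : V) : n • x = ((n : K)) • x :=
  (Nat.cast_smul_eq_nsmul K n x).symm

/-- For `K` of characteristic zero and `N` nilpotent (`N^m = 0`), the sequence
`0 → V → V[u] → V[u] → 0` is exact, where the first map is
`v ↦ exp(−Nu)·v` and the second is `D`:
`D` is surjective, `v ↦ exp(−Nu)·v` is injective, and the kernel of `D` is
exactly the image of `v ↦ exp(−Nu)·v`. -/
theorem stmt_6 (N : V →ₗ[K] V) (m : ℕ) (hm : N ^ m = 0) :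
    Function.Surjective (polyD N) ∧
    Function.Injective (expNegNu N m hm) ∧
    (∀ p : ℕ →₀ V, polyD N p = 0 ↔ ∃ v : V, p = expNegNu N m hm v) := by
  refine ⟨?_, ?_, ?_⟩
  · -- surjectivity
    intro q
    obtain ⟨d, hd⟩ : ∃ d, ∀ j, d ≤ j → q j = 0 := by
      refine ⟨(q.support.sup id) + 1, fun j hj => ?_⟩
      by_contra h
      have h1 : j ∈ q.support := Finsupp.mem_support_iff.mpr h
      have h2 := Finset.le_sup (f := id) h1
      simp only [id] at h2
      omega
    set f : ℕ → V := fun n =>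
      Nat.rec 0 (fun i x => (((i + 1 : ℕ) : K))⁻¹ • (q i - N x)) n with hf
    have hfs : ∀ i, f (i + 1) = (((i + 1 : ℕ) : K))⁻¹ • (q i - N (f i)) :=
      fun i => rfl
    have hvan : ∀ k, ∃ c : K, f (d + k) = c • (N ^ k) (f d) := by
      intro k
      induction k with
      | zero => exact ⟨1, by simp⟩
      | succ k ih =>
        obtain ⟨c, hc⟩ := ih
        refine ⟨-(((((d + k) + 1 : ℕ) : K))⁻¹ * c), ?_⟩
        rw [show d + (k + 1) = (d + k) + 1 by ring, hfs, hd _ (by omega), hc]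
        rw [show (N ^ (k + 1)) (f d) = N ((N ^ k) (f d)) by
          rw [pow_succ', Module.End.mul_apply]]
        rw [map_smul, zero_sub, smul_neg, smul_smul, neg_smul]
    have hsupp : ∀ n, d + m ≤ n → f n = 0 := by
      intro n hn
      obtain ⟨c, hc⟩ := hvan (n - d)
      have hz : (N : V →ₗ[K] V) ^ (n - d) = 0 := by
        rw [show n - d = (n - d - m) + m by omega, pow_add, hm, mul_zero]
      rw [hz] at hc
      simp only [LinearMap.zero_apply, smul_zero] at hc
      rw [show n = d + (n - d) by omega]
      exact hc
    refine ⟨Finsupp.onFinset (Finset.range (d + m)) f (fun i hi =>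
      Finset.mem_range.mpr (by by_contra hc; push_neg at hc; exact hi (hsupp i hc))), ?_⟩
    ext i
    rw [polyD_apply]
    simp only [Finsupp.onFinset_apply]
    rw [hfs i, nsmul_to_ksmul (K := K), smul_smul]
    have hne : ((i + 1 : ℕ) : K) ≠ 0 := by exact_mod_cast Nat.succ_ne_zero i
    push_cast
    rw [mul_inv_cancel₀ (by exact_mod_cast hne), one_smul]
    abel
  · -- injectivity
    intro v w h
    have h0 := congrArg (fun g : ℕ →₀ V => g 0) h
    simpa [expNegNu_apply] using h0
  · -- kernel characterization
    intro p
    constructor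
    · intro hDp
      refine ⟨p 0, ?_⟩
      have key : ∀ i, p i = ((-1 : K) ^ i / i.factorial) • ((N ^ i) (p 0)) := by
        intro i
        induction i with
        | zero => simp
        | succ i ih =>
          have h0 : polyD N p i = 0 := by rw [hDp]; rfl
          rw [polyD_apply] at h0
          have h1 : (i + 1) • p (i + 1) = -(N (p i)) := by
            rw [eq_neg_iff_add_eq_zero, add_comm]; exact h0
          rw [nsmul_to_ksmul (K := K)] at h1
          have hne : ((i + 1 : ℕ) : K) ≠ 0 := by exact_mod_cast Nat.succ_ne_zero i
          have h2 : p (i + 1) = (((i + 1 : ℕ) : K))⁻¹ • -(N (p i)) := by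
            rw [← h1, smul_smul, inv_mul_cancel₀ hne, one_smul]
          rw [h2, ih, map_smul, smul_neg, smul_smul]
          rw [show (N ^ (i + 1)) (p 0) = N ((N ^ i) (p 0)) by
            rw [pow_succ', Module.End.mul_apply]]
          rw [← neg_smul]
          congr 1
          have hfac : ((i + 1).factorial : K) = ((i + 1 : ℕ) : K) * (i.factorial : K) := by
            rw [Nat.factorial_succ, Nat.cast_mul]
          have hfne : ((i.factorial : ℕ) : K) ≠ 0 := by
            exact_mod_cast Nat.factorial_ne_zero i
          rw [hfac, div_eq_mul_inv, div_eq_mul_inv, mul_inv]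
          ring
      ext i
      rw [key i, expNegNu_apply]
    · rintro ⟨v, rfl⟩
      ext i
      rw [polyD_apply, expNegNu_apply, expNegNu_apply]
      rw [map_smul, nsmul_to_ksmul (K := K), smul_smul, Finsupp.coe_zero, Pi.zero_apply]
      rw [show (N ^ (i + 1)) v = N ((N ^ i) v) by rw [pow_succ', Module.End.mul_apply]]
      rw [← add_smul]
      have hfac : ((i + 1).factorial : K) = ((i + 1 : ℕ) : K) * (i.factorial : K) := by
        rw [Nat.factorial_succ, Nat.cast_mul]
      have hne : ((i + 1 : ℕ) : K) ≠ 0 := by exact_mod_cast Nat.succ_ne_zero i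
      have hfne : ((i.factorial : ℕ) : K) ≠ 0 := by
        exact_mod_cast Nat.factorial_ne_zero i
      have hc : (-1 : K) ^ i / i.factorial +
          ((i + 1 : ℕ) : K) * ((-1 : K) ^ (i + 1) / (i + 1).factorial) = 0 := by
        rw [hfac, pow_succ, mul_div_assoc', mul_div_mul_left _ _ hne,
          ← add_div, div_eq_zero_iff]
        left
        ring
      rw [hc, zero_smul]
end

section
/- Let K be a field, B a commutative K-algebra equipped with a decreasing filtration by ideals B = F^0 ⊇ F^1 ⊇ F^2 ⊇ ⋯ (with the convention F^s = B for s ≤ 0). Fix r ∈ ℤ and let M^0 → M^1 → ⋯ → M^d be a cochain complex of K-vector spaces with differentials d^j : M^j → M^{j+1}. Form the cochain complex C with C^j = M^j ⊗_K (B/F^{r-j}) and differential the composite M^j ⊗ B/F^{r-j} → M^j ⊗ B/F^{r-j-1} → M^{j+1} ⊗ B/F^{r-j-1} (projection followed by d^j ⊗ id). Then for every j there is a natural short exact sequence of K-vector spaces: 0 → (M^j / im d^{j-1}) ⊗_K (F^{r-j-1}/F^{r-j}) → H^j(C) → H^j(M^•) ⊗_K (B/F^{r-j-1}) → 0. -/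
open TensorProduct

section

variable (K : Type) [Field K]

/-- Cohomology of a complex of `K`-vector spaces at the middle of two
consecutive differentials `f`, `g`: `ker g ⧸ im f`. -/
abbrev midHomology {A B C : Type} [AddCommGroup A] [Module K A]
    [AddCommGroup B] [Module K B] [AddCommGroup C] [Module K C]
    (f : A →ₗ[K] B) (g : B →ₗ[K] C) : Type :=
  ↥(LinearMap.ker g) ⧸ ((LinearMap.range f).comap (LinearMap.ker g).subtype)

variable {B : Type} [CommRing B] [Algebra K B]

/-- The quotient `B/I` of a `K`-algebra `B` by an ideal `I`, viewed as a
`K`-vector space. -/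
abbrev idealQuot (I : Ideal B) : Type := B ⧸ (I.restrictScalars K)

/-- The canonical projection `B/I → B/I'` for `I ≤ I'`, as a `K`-linear map. -/
noncomputable def idealQuotProj (I I' : Ideal B) (h : I ≤ I') :
    idealQuot K I →ₗ[K] idealQuot K I' :=
  Submodule.mapQ _ _ LinearMap.id (by simpa using h)

/-- The subquotient `I'/I` (for `I ≤ I'`) as a `K`-vector space. -/
abbrev idealSubquot (I I' : Ideal B) : Type :=
  ↥(I'.restrictScalars K) ⧸
    ((I.restrictScalars K).comap (I'.restrictScalars K).subtype)

end


section Abstract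

open LinearMap

variable {K : Type} [Field K]
variable {M₀ M₁ M₂ Q₀ Q Q' S : Type}
  [AddCommGroup M₀] [Module K M₀] [AddCommGroup M₁] [Module K M₁]
  [AddCommGroup M₂] [Module K M₂] [AddCommGroup Q₀] [Module K Q₀]
  [AddCommGroup Q] [Module K Q] [AddCommGroup Q'] [Module K Q']
  [AddCommGroup S] [Module K S]

set_option maxHeartbeats 2000000 in
theorem abstract_ses
    (d₀ : M₀ →ₗ[K] M₁) (d₁ : M₁ →ₗ[K] M₂) (hd : d₁ ∘ₗ d₀ = 0)
    (P₀ : Q₀ →ₗ[K] Q) (hP₀ : Function.Surjective P₀)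
    (α : S →ₗ[K] Q) (hα : Function.Injective α)
    (π : Q →ₗ[K] Q') (hπ : Function.Surjective π)
    (hexact : Function.Exact α π) :
    ∃ (ι : ((M₁ ⧸ LinearMap.range d₀) ⊗[K] S) →ₗ[K]
            midHomology K (TensorProduct.map d₀ P₀) (TensorProduct.map d₁ π))
      (p : midHomology K (TensorProduct.map d₀ P₀) (TensorProduct.map d₁ π) →ₗ[K]
            (midHomology K d₀ d₁ ⊗[K] Q')),
      Function.Injective ι ∧
      LinearMap.range ι = LinearMap.ker p ∧
      Function.Surjective p := by
  classical
  set δ₀ := TensorProduct.map d₀ P₀ with hδ₀def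
  set δ₁ := TensorProduct.map d₁ π with hδ₁def
  set R₀ := LinearMap.range d₀ with hR₀def
  have hcod : ∀ a, d₀ a ∈ LinearMap.ker d₁ := fun a => by
    simp only [mem_ker, ← comp_apply, hd, LinearMap.zero_apply]
  -- decomposition of δ₁
  have key1 : ∀ x, δ₁ x = rTensor Q' d₁ (lTensor M₁ π x) := fun x => by
    rw [hδ₁def, ← rTensor_comp_lTensor M₁ d₁ π]; rfl
  -- range of δ₀
  have hR : LinearMap.range δ₀ = LinearMap.range (rTensor Q d₀) := by
    rw [hδ₀def, ← rTensor_comp_lTensor M₀ d₀ P₀]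
    exact range_comp_of_range_eq_top _ (range_eq_top.2 (lTensor_surjective M₀ hP₀))
  have hRsub : LinearMap.range (rTensor Q R₀.subtype) = LinearMap.range (rTensor Q d₀) := by
    conv_rhs => rw [← subtype_comp_codRestrict d₀ R₀ (fun a => mem_range_self d₀ a)]
    rw [rTensor_comp]
    refine (range_comp_of_range_eq_top _ (range_eq_top.2
      (rTensor_surjective Q (g := codRestrict R₀ d₀ fun a => mem_range_self d₀ a) ?_))).symm
    rintro ⟨y, a, ha⟩
    exact ⟨a, Subtype.ext ha⟩
  -- left exactness around ker d₁
  have E0 : Function.Exact (LinearMap.ker d₁).subtype d₁ :=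
    LinearMap.exact_iff.2 (Submodule.range_subtype _).symm
  set β := rTensor Q' (LinearMap.ker d₁).subtype with hβdef
  have hβinj : Function.Injective β :=
    Module.Flat.rTensor_preserves_injective_linearMap _ (Submodule.injective_subtype _)
  have hβrange : LinearMap.range β = LinearMap.ker (rTensor Q' d₁) :=
    (LinearMap.exact_iff.1 (Module.Flat.rTensor_exact Q' E0)).symm
  set e : ((LinearMap.ker d₁) ⊗[K] Q') ≃ₗ[K] ↥(LinearMap.ker (rTensor Q' d₁)) :=
    (LinearEquiv.ofInjective β hβinj).trans (LinearEquiv.ofEq _ _ hβrange) with hedef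
  have hcoe : ∀ w, ((e w : M₁ ⊗[K] Q')) = β w := fun w => rfl
  have hsymm : ∀ (z : ↥(LinearMap.ker (rTensor Q' d₁))) (w), β w = (z : M₁ ⊗[K] Q') →
      e.symm z = w := by
    intro z w h
    apply hβinj
    rw [← hcoe, e.apply_symm_apply, h]
  set qM : ↥(LinearMap.ker d₁) →ₗ[K] midHomology K d₀ d₁ :=
    Submodule.mkQ _ with hqMdef
  -- the map f1 : ker δ₁ → ker (d₁ ⊗ id)
  set f1 : ↥(LinearMap.ker δ₁) →ₗ[K] ↥(LinearMap.ker (rTensor Q' d₁)) :=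
    codRestrict _ ((lTensor M₁ π) ∘ₗ (LinearMap.ker δ₁).subtype)
      (fun x => by
        simp only [mem_ker, comp_apply, Submodule.coe_subtype, ← key1]
        exact x.2) with hf1def
  have hf1 : ∀ x : ↥(LinearMap.ker δ₁), (f1 x : M₁ ⊗[K] Q') = lTensor M₁ π (x : M₁ ⊗[K] Q) :=
    fun x => rfl
  set pbar : ↥(LinearMap.ker δ₁) →ₗ[K] (midHomology K d₀ d₁ ⊗[K] Q') :=
    (rTensor Q' qM) ∘ₗ (e.symm.toLinearMap) ∘ₗ f1 with hpbardef
  -- pbar kills range δ₀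
  set p₀ : Submodule K ↥(LinearMap.ker d₁) := R₀.comap (LinearMap.ker d₁).subtype with hp₀def
  have hqMcod : ∀ z : M₀ ⊗[K] Q',
      rTensor Q' qM (rTensor Q' (codRestrict (LinearMap.ker d₁) d₀ hcod) z) = 0 := by
    intro z
    rw [← comp_apply, ← rTensor_comp]
    have : qM ∘ₗ codRestrict (LinearMap.ker d₁) d₀ hcod = 0 := by
      ext a
      simp only [comp_apply, LinearMap.zero_apply, hqMdef, Submodule.mkQ_apply]
      rw [Submodule.Quotient.mk_eq_zero]
      exact mem_range_self d₀ a
    rw [this, rTensor_zero, LinearMap.zero_apply]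
  have hker : (LinearMap.range δ₀).comap (LinearMap.ker δ₁).subtype ≤ LinearMap.ker pbar := by
    intro x hx
    have hx' : (x : M₁ ⊗[K] Q) ∈ LinearMap.range (rTensor Q d₀) := by
      rw [← hR]; exact hx
    obtain ⟨y, hy⟩ := hx'
    set z := lTensor M₀ π y with hzdef
    set w := rTensor Q' (codRestrict (LinearMap.ker d₁) d₀ hcod) z with hwdef
    have hβw : β w = lTensor M₁ π (x : M₁ ⊗[K] Q) := by
      rw [hwdef, hβdef, ← comp_apply, ← rTensor_comp, subtype_comp_codRestrict, hzdef,
        ← hy, ← comp_apply, ← comp_apply, rTensor_comp_lTensor, lTensor_comp_rTensor]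
    have : e.symm (f1 x) = w := hsymm _ _ (by rw [hβw, hf1])
    simp only [mem_ker, hpbardef, comp_apply, LinearEquiv.coe_coe, this]
    exact hqMcod z
  set p : midHomology K δ₀ δ₁ →ₗ[K] (midHomology K d₀ d₁ ⊗[K] Q') :=
    Submodule.liftQ _ pbar hker with hpdef
  -- surjectivity of p
  have hpsurj : Function.Surjective p := by
    intro t
    obtain ⟨w, hw⟩ := rTensor_surjective Q' (g := qM) (Submodule.mkQ_surjective _) t
    obtain ⟨u, hu⟩ := lTensor_surjective (↥(LinearMap.ker d₁)) (g := π) hπ w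
    set x := rTensor Q (LinearMap.ker d₁).subtype u with hxdef
    have hβw : lTensor M₁ π x = β w := by
      rw [hxdef, ← hu, hβdef, ← comp_apply, ← comp_apply,
        lTensor_comp_rTensor, ← rTensor_comp_lTensor]
    have hxker : x ∈ LinearMap.ker δ₁ := by
      rw [mem_ker, key1, hβw]
      have : β w ∈ LinearMap.ker (rTensor Q' d₁) := hβrange ▸ mem_range_self β w
      exact this
    refine ⟨Submodule.Quotient.mk ⟨x, hxker⟩, ?_⟩
    rw [hpdef, Submodule.liftQ_apply, hpbardef]
    simp only [comp_apply, LinearEquiv.coe_coe]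
    rw [hsymm _ w (by rw [hf1]; exact hβw.symm), hw]
  -- construction of ι
  have hπα : ∀ s, π (α s) = 0 := fun s => hexact.apply_apply_eq_zero s
  have hγker : ∀ x : M₁ ⊗[K] S, lTensor M₁ α x ∈ LinearMap.ker δ₁ := by
    intro x
    have hπα0 : π ∘ₗ α = 0 := by ext s; simp [hπα]
    have hz : (lTensor M₁ π) ((lTensor M₁ α) x) = 0 := by
      rw [← comp_apply, ← lTensor_comp, hπα0, lTensor_zero, LinearMap.zero_apply]
    rw [mem_ker, key1, hz, map_zero]
  set γ' : (M₁ ⊗[K] S) →ₗ[K] ↥(LinearMap.ker δ₁) :=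
    codRestrict _ (lTensor M₁ α) hγker with hγ'def
  set ιbar : (M₁ ⊗[K] S) →ₗ[K] midHomology K δ₀ δ₁ :=
    (Submodule.mkQ _) ∘ₗ γ' with hιbardef
  have hcond : R₀ ≤ LinearMap.ker (TensorProduct.curry ιbar) := by
    rintro m ⟨a, rfl⟩
    rw [mem_ker]
    ext s
    simp only [TensorProduct.curry_apply, hιbardef, comp_apply, Submodule.mkQ_apply,
      LinearMap.zero_apply]
    rw [Submodule.Quotient.mk_eq_zero]
    show (γ' (d₀ a ⊗ₜ[K] s) : M₁ ⊗[K] Q) ∈ LinearMap.range δ₀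
    rw [hR]
    exact ⟨a ⊗ₜ[K] α s, rfl⟩
  set ι : ((M₁ ⧸ R₀) ⊗[K] S) →ₗ[K] midHomology K δ₀ δ₁ :=
    TensorProduct.lift (Submodule.liftQ R₀ (TensorProduct.curry ιbar) hcond) with hιdef
  have hι : ∀ (m : M₁) (s : S), ι (Submodule.Quotient.mk m ⊗ₜ[K] s) = ιbar (m ⊗ₜ[K] s) := by
    intro m s
    rw [hιdef]
    simp [TensorProduct.lift.tmul]
  -- injectivity of ι
  have hcond2 : LinearMap.range δ₀ ≤ LinearMap.ker (rTensor Q R₀.mkQ) := by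
    rw [hR]
    exact le_of_eq (LinearMap.exact_iff.1 (rTensor_exact Q
      (LinearMap.exact_map_mkQ_range d₀) (Submodule.mkQ_surjective _))).symm
  set g' : ((M₁ ⊗[K] Q) ⧸ LinearMap.range δ₀) →ₗ[K] ((M₁ ⧸ R₀) ⊗[K] Q) :=
    Submodule.liftQ _ (rTensor Q R₀.mkQ) hcond2 with hg'def
  set θ : midHomology K δ₀ δ₁ →ₗ[K] ((M₁ ⊗[K] Q) ⧸ LinearMap.range δ₀) :=
    Submodule.liftQ _ ((LinearMap.range δ₀).mkQ ∘ₗ (LinearMap.ker δ₁).subtype)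
      (fun x hx => by
        simp only [mem_ker, comp_apply, Submodule.mkQ_apply, Submodule.Quotient.mk_eq_zero]
        exact hx) with hθdef
  have htri0 : g' ∘ₗ θ ∘ₗ ι = lTensor (M₁ ⧸ R₀) α := by
    apply TensorProduct.ext'
    intro mq s
    obtain ⟨m, rfl⟩ := Submodule.mkQ_surjective R₀ mq
    simp only [comp_apply, Submodule.mkQ_apply]
    rw [hι]
    simp only [hιbardef, comp_apply, hθdef, Submodule.mkQ_apply, Submodule.liftQ_apply]
    show g' (Submodule.Quotient.mk ((γ' (m ⊗ₜ[K] s) : M₁ ⊗[K] Q))) = _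
    rw [hg'def, Submodule.liftQ_apply]
    rfl
  have htri : ∀ x : (M₁ ⧸ R₀) ⊗[K] S, g' (θ (ι x)) = lTensor (M₁ ⧸ R₀) α x := by
    intro x
    have := LinearMap.congr_fun htri0 x
    simpa using this
  have hιinj : Function.Injective ι := by
    have hlinj : Function.Injective (lTensor (M₁ ⧸ R₀) α) :=
      Module.Flat.lTensor_preserves_injective_linearMap _ hα
    intro a b hab
    apply hlinj
    rw [← htri, ← htri, hab]
  -- range ι ≤ ker p
  have hsub : LinearMap.range ι ≤ LinearMap.ker p := by
    rintro _ ⟨x, rfl⟩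
    rw [mem_ker]
    induction x using TensorProduct.induction_on with
    | zero => simp
    | add a b ha hb => rw [map_add, map_add, ha, hb, add_zero]
    | tmul mq s =>
      obtain ⟨m, rfl⟩ := Submodule.mkQ_surjective R₀ mq
      rw [Submodule.mkQ_apply, hι, hιbardef]
      simp only [comp_apply]
      show p (Submodule.Quotient.mk (γ' (m ⊗ₜ[K] s))) = 0
      rw [hpdef, Submodule.liftQ_apply, hpbardef]
      simp only [comp_apply, LinearEquiv.coe_coe]
      have hf10 : f1 (γ' (m ⊗ₜ[K] s)) = 0 := by
        apply Subtype.ext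
        rw [hf1]
        show lTensor M₁ π (lTensor M₁ α (m ⊗ₜ[K] s)) = 0
        simp [hπα]
      rw [hf10, map_zero, map_zero]
  -- ker p ≤ range ι
  have hsup : LinearMap.ker p ≤ LinearMap.range ι := by
    intro h hh
    obtain ⟨x, rfl⟩ := Submodule.mkQ_surjective _ h
    rw [mem_ker, Submodule.mkQ_apply, hpdef, Submodule.liftQ_apply] at hh
    set w := e.symm (f1 x) with hwdef
    have hw0 : rTensor Q' qM w = 0 := hh
    -- w ∈ range (p₀.subtype ⊗ id)
    have hexact2 : Function.Exact (rTensor Q' p₀.subtype) (rTensor Q' qM) :=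
      rTensor_exact Q' (LinearMap.exact_subtype_mkQ p₀) (Submodule.mkQ_surjective _)
    obtain ⟨v, hv⟩ := (hexact2 w).1 hw0
    obtain ⟨u, hu⟩ := lTensor_surjective (↥p₀) (g := π) hπ v
    set ks : ↥p₀ →ₗ[K] M₁ := (LinearMap.ker d₁).subtype ∘ₗ p₀.subtype with hksdef
    set t := rTensor Q ks u with htdef
    have h1 : lTensor M₁ π t = β w := by
      have e1 : lTensor M₁ π t = rTensor Q' ks (lTensor (↥p₀) π u) := by
        rw [htdef, ← comp_apply, lTensor_comp_rTensor, ← rTensor_comp_lTensor, comp_apply]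
      rw [e1, hu, hksdef, rTensor_comp, comp_apply, hv]
    have h2 : β w = lTensor M₁ π (x : M₁ ⊗[K] Q) := by
      rw [hwdef, ← hcoe, e.apply_symm_apply, hf1]
    have h3 : t ∈ LinearMap.range δ₀ := by
      rw [hR, ← hRsub]
      have hksmem : ∀ a : ↥p₀, ks a ∈ R₀ := fun a => a.2
      rw [htdef, hksdef]
      rw [show (LinearMap.ker d₁).subtype ∘ₗ p₀.subtype
          = R₀.subtype ∘ₗ (codRestrict R₀ ((LinearMap.ker d₁).subtype ∘ₗ p₀.subtype)
              (fun a => a.2)) from (subtype_comp_codRestrict _ _ _).symm]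
      rw [rTensor_comp]
      exact ⟨rTensor Q (codRestrict R₀ ((LinearMap.ker d₁).subtype ∘ₗ p₀.subtype)
        (fun a => a.2)) u, rfl⟩
    have h4 : lTensor M₁ π ((x : M₁ ⊗[K] Q) - t) = 0 := by
      rw [map_sub, ← h2, h1, sub_self]
    have hexact3 : Function.Exact (lTensor M₁ α) (lTensor M₁ π) :=
      Module.Flat.lTensor_exact M₁ hexact
    obtain ⟨y, hy⟩ := (hexact3 _).1 h4
    refine ⟨rTensor S R₀.mkQ y, ?_⟩
    -- compute ι applied
    have hιy : ∀ z : M₁ ⊗[K] S, ι (rTensor S R₀.mkQ z) = ιbar z := by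
      intro z
      induction z using TensorProduct.induction_on with
      | zero => simp
      | add a b ha hb => simp only [map_add, ha, hb]
      | tmul m s =>
        rw [show rTensor S R₀.mkQ (m ⊗ₜ[K] s) = (Submodule.Quotient.mk m) ⊗ₜ[K] s from rfl]
        exact hι m s
    rw [hιy]
    show Submodule.Quotient.mk (γ' y) = Submodule.Quotient.mk x
    rw [Submodule.Quotient.eq]
    have hc : ((γ' y - x : ↥(LinearMap.ker δ₁)) : M₁ ⊗[K] Q)
        = ((x : M₁ ⊗[K] Q) - t) - (x : M₁ ⊗[K] Q) := by
      have h5 : (γ' y : M₁ ⊗[K] Q) = (x : M₁ ⊗[K] Q) - t := hy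
      rw [Submodule.coe_sub, h5]
    refine Submodule.mem_comap.2 ?_
    rw [Submodule.subtype_apply, hc, sub_sub_cancel_left]
    exact neg_mem h3
  exact ⟨ι, p, hιinj, le_antisymm hsub hsup, hpsurj⟩

end Abstract

section Glue

variable {K : Type} [Field K] {B : Type} [CommRing B] [Algebra K B]

lemma idealQuotProj_surjective (I I' : Ideal B) (h : I ≤ I') :
    Function.Surjective (idealQuotProj K I I' h) := by
  intro y
  obtain ⟨b, rfl⟩ := Submodule.mkQ_surjective _ y
  exact ⟨Submodule.Quotient.mk b, by simp [idealQuotProj, Submodule.mapQ_apply]⟩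

/-- The natural inclusion `I'/I → B/I`. -/
noncomputable def subqIncl (I I' : Ideal B) : idealSubquot K I I' →ₗ[K] idealQuot K I :=
  Submodule.mapQ _ _ (I'.restrictScalars K).subtype le_rfl

lemma subqIncl_injective (I I' : Ideal B) :
    Function.Injective (subqIncl (K := K) I I') := by
  intro a b hab
  obtain ⟨x, rfl⟩ := Submodule.mkQ_surjective _ a
  obtain ⟨y, rfl⟩ := Submodule.mkQ_surjective _ b
  simp only [Submodule.mkQ_apply, subqIncl, Submodule.mapQ_apply] at hab ⊢
  rw [Submodule.Quotient.eq] at hab ⊢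
  simpa using hab

lemma subqIncl_exact (I I' : Ideal B) (h : I ≤ I') :
    Function.Exact (subqIncl (K := K) I I')
      (idealQuotProj K I I' h) := by
  intro y
  obtain ⟨b, rfl⟩ := Submodule.mkQ_surjective _ y
  constructor
  · intro h0
    have hb : b ∈ I'.restrictScalars K := by
      rwa [Submodule.mkQ_apply, idealQuotProj, Submodule.mapQ_apply,
        Submodule.Quotient.mk_eq_zero] at h0
    exact ⟨Submodule.Quotient.mk (⟨b, hb⟩ : ↥(I'.restrictScalars K)),
      by simp [subqIncl, Submodule.mapQ_apply]⟩
  · rintro ⟨s, hs⟩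
    obtain ⟨x, rfl⟩ := Submodule.mkQ_surjective _ s
    simp only [Submodule.mkQ_apply, subqIncl, Submodule.mapQ_apply] at hs
    have hxb : (x : B) - b ∈ Submodule.restrictScalars K I := (Submodule.Quotient.eq _).1 hs
    have hb : b ∈ Submodule.restrictScalars K I' := by
      have h1 : (x : B) - ((x : B) - b) = b := by ring
      exact h1 ▸ sub_mem x.2 (h hxb)
    show (idealQuotProj K I I' h) (Submodule.Quotient.mk b) = 0
    simp only [idealQuotProj, Submodule.mapQ_apply, LinearMap.id_coe, id_eq]
    rw [Submodule.Quotient.mk_eq_zero]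
    exact hb

end Glue

/-- Computation of the cohomology of the filtered complex
`C^j = M^j ⊗_K B/F^{r-j}` with differential
`M^j ⊗ B/F^{r-j} → M^j ⊗ B/F^{r-j-1} → M^{j+1} ⊗ B/F^{r-j-1}` (projection
followed by `d^j ⊗ id`), encoded at a fixed spot `j` by the three consecutive
terms with differentials `d₀ : M₀ → M₁`, `d₁ : M₁ → M₂` (`d₁ ∘ d₀ = 0`) of the
underlying complex: there is a short exact sequence
`0 → (M^j/im d^{j-1}) ⊗ (F^{r-j-1}/F^{r-j}) → H^j(C) → H^j(M^•) ⊗ B/F^{r-j-1} → 0`.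
Here `F` is a decreasing filtration of `B` by ideals with `F^s = B` for
`s ≤ 0`. -/
theorem stmt_9 {K : Type} [Field K] {B : Type} [CommRing B] [Algebra K B]
    (F : ℤ → Ideal B) (hdec : ∀ s : ℤ, F (s + 1) ≤ F s)
    (htop : ∀ s : ℤ, s ≤ 0 → F s = ⊤)
    (r j : ℤ)
    {M₀ M₁ M₂ : Type} [AddCommGroup M₀] [Module K M₀]
    [AddCommGroup M₁] [Module K M₁] [AddCommGroup M₂] [Module K M₂]
    (d₀ : M₀ →ₗ[K] M₁) (d₁ : M₁ →ₗ[K] M₂) (hd : d₁ ∘ₗ d₀ = 0)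
    -- the two differentials of the filtered complex `C` around spot `j`:
    (δ₀ : (M₀ ⊗[K] idealQuot K (F (r - j + 1))) →ₗ[K]
          (M₁ ⊗[K] idealQuot K (F (r - j))))
    (δ₁ : (M₁ ⊗[K] idealQuot K (F (r - j))) →ₗ[K]
          (M₂ ⊗[K] idealQuot K (F (r - j - 1)))) 
    (hδ₀ : δ₀ = TensorProduct.map d₀
      (idealQuotProj K (F (r - j + 1)) (F (r - j))
        (by simpa using hdec (r - j))))
    (hδ₁ : δ₁ = TensorProduct.map d₁
      (idealQuotProj K (F (r - j)) (F (r - j - 1))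
        (by simpa [show r - j - 1 + 1 = r - j by ring] using hdec (r - j - 1)))) :
    ∃ (ι : ((M₁ ⧸ LinearMap.range d₀) ⊗[K]
              idealSubquot K (F (r - j)) (F (r - j - 1))) →ₗ[K]
            midHomology K δ₀ δ₁)
      (p : midHomology K δ₀ δ₁ →ₗ[K]
            (midHomology K d₀ d₁ ⊗[K] idealQuot K (F (r - j - 1)))),
      Function.Injective ι ∧
      LinearMap.range ι = LinearMap.ker p ∧
      Function.Surjective p := by
  subst hδ₀ hδ₁
  exact abstract_ses d₀ d₁ hd _
    (idealQuotProj_surjective (F (r - j + 1)) (F (r - j)) (by simpa using hdec (r - j)))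
    (subqIncl (F (r - j)) (F (r - j - 1)))
    (subqIncl_injective (F (r - j)) (F (r - j - 1)))
    (idealQuotProj K (F (r - j)) (F (r - j - 1))
      (by simpa [show r - j - 1 + 1 = r - j by ring] using hdec (r - j - 1)))
    (idealQuotProj_surjective (F (r - j)) (F (r - j - 1))
      (by simpa [show r - j - 1 + 1 = r - j by ring] using hdec (r - j - 1)))
    (subqIncl_exact (F (r - j)) (F (r - j - 1))
      (by simpa [show r - j - 1 + 1 = r - j by ring] using hdec (r - j - 1)))
end

section
/- Let K be a field complete with respect to a nonarchimedean absolute value |·|. Let O be the K-vector space of sequences (b_n)_{n≥0} in K such that |b_n| r^n → 0 as n → ∞ for every real r > 0, and let T be the K-vector space of sequences (a_n)_{n≥1} in K such that there exists ρ > 0 with |a_n| ρ^n → 0 as n → ∞. Then: (1) for every a ∈ T and b ∈ O the series ⟨a, b⟩ := ∑_{n≥0} a_{n+1} b_n converges in K; (2) the resulting K-bilinear pairing T × O → K is nondegenerate, i.e., if ⟨a, b⟩ = 0 for all b ∈ O then a = 0, and if ⟨a, b⟩ = 0 for all a ∈ T then b = 0. -/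
open Filter

/-- Coefficients of entire functions on the rigid affine line:
`b ∈ O` iff `‖b n‖ r^n → 0` for every `r > 0`. -/
def entireCoeffs (K : Type*) [NormedField K] : Set (ℕ → K) :=
  {b | ∀ r : ℝ, 0 < r → Tendsto (fun n => ‖b n‖ * r ^ n) atTop (nhds 0)}

/-- Coefficients of elements of `H^1_c(𝔸^1, O)`: sequences `(a_n)` (here `a n`
stands for the coefficient `a_{n+1}` of `x^{-(n+1)}`) such that
`‖a_n‖ ρ^n → 0` for some `ρ > 0`. -/
def boundaryCoeffs (K : Type*) [NormedField K] : Set (ℕ → K) :=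
  {a | ∃ ρ : ℝ, 0 < ρ ∧ Tendsto (fun n => ‖a n‖ * ρ ^ n) atTop (nhds 0)}

lemma aux_summable {K : Type*} [NormedField K] [CompleteSpace K]
    (hna : IsNonarchimedean (fun x : K => ‖x‖)) {f : ℕ → K}
    (hf : Tendsto (fun n => ‖f n‖) atTop (nhds 0)) : Summable f := by
  rw [summable_iff_cauchySeq_finset, cauchySeq_finset_iff_vanishing_norm]
  intro ε hε
  obtain ⟨N, hN⟩ := Metric.tendsto_atTop.mp hf ε hε
  refine ⟨Finset.range N, fun t ht => ?_⟩
  have key : ∀ s : Finset ℕ, (∀ i ∈ s, ‖f i‖ < ε) → ‖∑ i ∈ s, f i‖ < ε := by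
    intro s
    induction s using Finset.induction with
    | empty => intro _; simpa using hε
    | insert _ _ h ih =>
        intro hs
        rw [Finset.sum_insert h]
        exact lt_of_le_of_lt (hna _ _)
          (max_lt (hs _ (Finset.mem_insert_self _ _))
            (ih fun i hi => hs _ (Finset.mem_insert_of_mem hi)))
  refine key t fun i hi => ?_
  have hNi : N ≤ i := by
    by_contra hlt
    exact (Finset.disjoint_left.mp ht hi) (Finset.mem_range.mpr (not_le.mp hlt))
  have := hN i hNi
  simpa [Real.dist_eq, abs_of_nonneg (norm_nonneg _)] using this

lemma aux_delta_entire {K : Type*} [NormedField K] (m : ℕ) :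
    (fun n => if n = m then (1 : K) else 0) ∈ entireCoeffs K := by
  intro r hr
  refine Tendsto.congr' ?_ tendsto_const_nhds
  filter_upwards [eventually_gt_atTop m] with n hn
  have : n ≠ m := hn.ne'
  simp [this]

lemma aux_delta_boundary {K : Type*} [NormedField K] (m : ℕ) :
    (fun n => if n = m then (1 : K) else 0) ∈ boundaryCoeffs K := by
  refine ⟨1, one_pos, ?_⟩
  refine Tendsto.congr' ?_ tendsto_const_nhds
  filter_upwards [eventually_gt_atTop m] with n hn
  have : n ≠ m := hn.ne'
  simp [this]

/-- The residue pairing `⟨a, b⟩ = ∑_{n≥0} a_{n+1} b_n` between `T` and `O`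
converges and is nondegenerate on both sides. -/
theorem stmt_12 (K : Type*) [NormedField K] [CompleteSpace K]
    (hna : IsNonarchimedean (fun x : K => ‖x‖)) :
    (∀ a ∈ boundaryCoeffs K, ∀ b ∈ entireCoeffs K,
        Summable (fun n => a n * b n)) ∧
    (∀ a ∈ boundaryCoeffs K,
        (∀ b ∈ entireCoeffs K, (∑' n, a n * b n) = 0) → a = 0) ∧
    (∀ b ∈ entireCoeffs K,
        (∀ a ∈ boundaryCoeffs K, (∑' n, a n * b n) = 0) → b = 0) := by
  refine ⟨?_, ?_, ?_⟩
  · rintro a ⟨ρ, hρ, ha⟩ b hb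
    apply aux_summable hna
    have hb' := hb ρ⁻¹ (inv_pos.mpr hρ)
    have := ha.mul hb'
    rw [mul_zero] at this
    refine Tendsto.congr (fun n => ?_) this
    rw [norm_mul]
    field_simp
    rw [mul_right_comm _ _ ‖b n‖, mul_assoc, ← mul_pow, mul_one_div_cancel hρ.ne', one_pow, mul_one]
  · rintro a ha h
    funext m
    have := h _ (aux_delta_entire m)
    rwa [tsum_eq_single m (fun n hn => by simp [hn]), if_pos rfl, mul_one] at this
  · rintro b hb h
    funext m
    have := h _ (aux_delta_boundary m)
    rwa [tsum_eq_single m (fun n hn => by simp [hn]), if_pos rfl, one_mul] at this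
end
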